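/- Let p be an odd prime, 1 ≤ w < p, and for fixed 0 ≤ l < p let D_l = {u : 0 ≤ u < p², gcd(u,p)=1, q_{p,w}(u)=l}. Let θ be a primitive p-th root of unity in an algebraic closure of F₂, and D_l(X) = Σ_{u ∈ D_l} X^u over F₂. Then D_l(θ^m) = 0 if p | m and D_l(θ^m) = 1 otherwise. -/

import Mathlib

/-- The polynomial quotient `q_{p,w}(u)`. -/
def polyQuot (p w u : ℕ) : ℕ := ((((u : ℤ) ^ w - (u : ℤ) ^ (w * p)) / (p : ℤ)) % (p : ℤ)).toNat

/-- The set `D_l = {u : 0 ≤ u < p², gcd(u,p)=1, q_{p,w}(u) = l}`. -/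
def Dl (p w l : ℕ) : Finset ℕ :=
  (Finset.range (p ^ 2)).filter (fun u => Nat.gcd u p = 1 ∧ polyQuot p w u = l)

open Finset

private lemma aux_lin (d a u : ℤ) (h : d ∣ u - a) (n : ℕ) :
    d ^ 2 ∣ u ^ (n + 1) - (a ^ (n + 1) + (n + 1) * a ^ n * (u - a)) := by
  obtain ⟨c, hc⟩ := h
  induction n with
  | zero => exact ⟨0, by ring⟩
  | succ n ih =>
    obtain ⟨e, he⟩ := ih
    refine ⟨u * e + (n + 1) * a ^ n * c ^ 2, ?_⟩
    push_cast at he ⊢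
    linear_combination u * he + ((n : ℤ) + 1) * a ^ n * (u - a + d * c) * hc

private lemma dvd_num (p w : ℕ) (hp : p.Prime) (x : ℤ) :
    (p : ℤ) ∣ x ^ w - x ^ (w * p) := by
  haveI := Fact.mk hp
  have h : ((x ^ w - x ^ (w * p) : ℤ) : ZMod p) = 0 := by
    push_cast [pow_mul, ZMod.pow_card]
    ring
  exact (ZMod.intCast_zmod_eq_zero_iff_dvd _ _).mp h

private lemma polyQuot_lt (p w u : ℕ) (hp : 0 < p) : polyQuot p w u < p := by
  unfold polyQuot
  have h1 : (0 : ℤ) < p := by exact_mod_cast hp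
  have h2 := Int.emod_lt_of_pos (((u : ℤ) ^ w - (u : ℤ) ^ (w * p)) / (p : ℤ)) h1
  have h3 := Int.emod_nonneg (((u : ℤ) ^ w - (u : ℤ) ^ (w * p)) / (p : ℤ)) (by positivity : (p:ℤ) ≠ 0)
  omega

private lemma polyQuot_cast (p w u : ℕ) (hp : p.Prime) :
    ((polyQuot p w u : ℕ) : ZMod p)
      = (((((u : ℤ) ^ w - (u : ℤ) ^ (w * p)) / (p : ℤ)) : ℤ) : ZMod p) := by
  unfold polyQuot
  set x : ℤ := ((u : ℤ) ^ w - (u : ℤ) ^ (w * p)) / (p : ℤ) with hx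
  have h3 := Int.emod_nonneg x (by exact_mod_cast hp.ne_zero : (p:ℤ) ≠ 0)
  have : (((x % (p : ℤ)).toNat : ℕ) : ℤ) = x % (p : ℤ) := Int.toNat_of_nonneg h3
  calc ((x % (p : ℤ)).toNat : ZMod p) = (((x % (p : ℤ)).toNat : ℤ) : ZMod p) := by push_cast; ring
    _ = ((x % (p : ℤ) : ℤ) : ZMod p) := by rw [this]
    _ = (x : ZMod p) := ZMod.intCast_mod x p

private lemma key (p w a k : ℕ) (hp : p.Prime) (hw : 1 ≤ w) :
    ((polyQuot p w (a + k * p) : ℕ) : ZMod p)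
      = (polyQuot p w a : ZMod p) + (w : ZMod p) * (a : ZMod p) ^ (w - 1) * (k : ZMod p) := by
  obtain ⟨w', rfl⟩ : ∃ w', w = w' + 1 := ⟨w - 1, by omega⟩
  obtain ⟨p', hp'⟩ : ∃ p', p = p' + 1 := ⟨p - 1, by have := hp.pos; omega⟩
  set U : ℤ := (a : ℤ) + (k : ℤ) * (p : ℤ) with hU
  have hdvd : (p : ℤ) ∣ U - (a : ℤ) := ⟨k, by rw [hU]; ring⟩
  -- the linear expansion for exponent w
  have hA := aux_lin (p : ℤ) (a : ℤ) U hdvd w'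
  -- p^2 ∣ U^p - a^p
  have hB : ((p:ℤ)) ^ 2 ∣ U ^ p - (a : ℤ) ^ p := by
    have h1 := aux_lin (p : ℤ) (a : ℤ) U hdvd p'
    have h2 : ((p:ℤ)) ^ 2 ∣ ((p' : ℤ) + 1) * (a : ℤ) ^ p' * (U - (a : ℤ)) := by
      refine ⟨(a : ℤ) ^ p' * k, ?_⟩
      have : U - (a : ℤ) = (k : ℤ) * (p : ℤ) := by rw [hU]; ring
      rw [this]
      have : ((p' : ℤ) + 1) = (p : ℤ) := by rw [hp']; push_cast; ring
      rw [this]; ring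
    have : ((p:ℤ)) ^ 2 ∣ _ := dvd_add h1 h2
    rw [hp'] at this ⊢
    convert this using 1
    ring
  have hC : ((p:ℤ)) ^ 2 ∣ U ^ ((w' + 1) * p) - (a : ℤ) ^ ((w' + 1) * p) := by
    rw [mul_comm (w' + 1) p, pow_mul, pow_mul]
    exact hB.trans (sub_dvd_pow_sub_pow _ _ _)
  -- combine
  have hkey : ((p:ℤ)) ^ 2 ∣ (U ^ (w' + 1) - U ^ ((w' + 1) * p))
      - ((a : ℤ) ^ (w' + 1) - (a : ℤ) ^ ((w' + 1) * p))
      - ((w' : ℤ) + 1) * (a : ℤ) ^ w' * (k : ℤ) * (p : ℤ) := by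
    have : ((p:ℤ)) ^ 2 ∣ _ := dvd_sub hA hC
    convert this using 1
    have : U - (a : ℤ) = (k : ℤ) * (p : ℤ) := by rw [hU]; ring
    rw [this]; ring
  -- now divide by p
  have hNU : (p : ℤ) ∣ U ^ (w' + 1) - U ^ ((w' + 1) * p) := by
    have : U = ((a + k * p : ℕ) : ℤ) := by push_cast; ring
    rw [this]; exact dvd_num p (w' + 1) hp _
  have hNa : (p : ℤ) ∣ (a : ℤ) ^ (w' + 1) - (a : ℤ) ^ ((w' + 1) * p) :=
    dvd_num p (w' + 1) hp _
  set QU : ℤ := (U ^ (w' + 1) - U ^ ((w' + 1) * p)) / (p : ℤ) with hQU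
  set Qa : ℤ := ((a : ℤ) ^ (w' + 1) - (a : ℤ) ^ ((w' + 1) * p)) / (p : ℤ) with hQa
  have eU : (p : ℤ) * QU = U ^ (w' + 1) - U ^ ((w' + 1) * p) := Int.mul_ediv_cancel' hNU
  have ea : (p : ℤ) * Qa = (a : ℤ) ^ (w' + 1) - (a : ℤ) ^ ((w' + 1) * p) := Int.mul_ediv_cancel' hNa
  have hpne : (p : ℤ) ≠ 0 := by exact_mod_cast hp.ne_zero
  have hdiv : (p : ℤ) ∣ QU - Qa - ((w' : ℤ) + 1) * (a : ℤ) ^ w' * (k : ℤ) := by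
    have h2 : (p:ℤ) * (p:ℤ) ∣ (p:ℤ) * (QU - Qa - ((w' : ℤ) + 1) * (a : ℤ) ^ w' * (k : ℤ)) := by
      have h3 : (p:ℤ) * (QU - Qa - ((w' : ℤ) + 1) * (a : ℤ) ^ w' * (k : ℤ))
          = (U ^ (w' + 1) - U ^ ((w' + 1) * p))
            - ((a : ℤ) ^ (w' + 1) - (a : ℤ) ^ ((w' + 1) * p))
            - ((w' : ℤ) + 1) * (a : ℤ) ^ w' * (k : ℤ) * (p : ℤ) := by
        rw [mul_sub, mul_sub, eU, ea]; ring
      rw [h3, ← sq]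
      exact hkey
    exact (mul_dvd_mul_iff_left hpne).mp h2
  have hz : ((QU - Qa - ((w' : ℤ) + 1) * (a : ℤ) ^ w' * (k : ℤ) : ℤ) : ZMod p) = 0 :=
    (ZMod.intCast_zmod_eq_zero_iff_dvd _ _).mpr hdiv
  rw [polyQuot_cast _ _ _ hp, polyQuot_cast _ _ _ hp]
  have hUU : ((a + k * p : ℕ) : ℤ) = U := by push_cast; ring
  rw [hUU, ← hQU, ← hQa]
  have hexp : w' + 1 - 1 = w' := by omega
  rw [hexp]
  push_cast at hz ⊢
  linear_combination hz


private lemma mem_Dl {p w l u : ℕ} :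
    u ∈ Dl p w l ↔ u < p ^ 2 ∧ Nat.gcd u p = 1 ∧ polyQuot p w u = l := by
  simp [Dl, Finset.mem_filter, Finset.mem_range, and_assoc]

private lemma cne (p w a : ℕ) (hp : p.Prime) (hw1 : 1 ≤ w) (hwp : w < p)
    (ha0 : 0 < a) (hap : a < p) :
    (w : ZMod p) * (a : ZMod p) ^ (w - 1) ≠ 0 := by
  haveI := Fact.mk hp
  have hw : (w : ZMod p) ≠ 0 := by
    rw [Ne, ZMod.natCast_eq_zero_iff]
    intro h
    have := Nat.le_of_dvd (by omega) h
    omega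
  have ha : (a : ZMod p) ≠ 0 := by
    rw [Ne, ZMod.natCast_eq_zero_iff]
    intro h
    have := Nat.le_of_dvd ha0 h
    omega
  exact mul_ne_zero hw (pow_ne_zero _ ha)

private lemma modp_pos {p w l u : ℕ} (hp : p.Prime) (hu : u ∈ Dl p w l) : 0 < u % p := by
  rcases mem_Dl.mp hu with ⟨-, hg, -⟩
  rcases Nat.eq_zero_or_pos (u % p) with h | h
  · exfalso
    have hdvd : p ∣ u := Nat.dvd_of_mod_eq_zero h
    have : p ∣ Nat.gcd u p := Nat.dvd_gcd hdvd dvd_rfl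
    rw [hg] at this
    have := Nat.le_of_dvd one_pos this
    have := hp.two_le
    omega
  · exact h

private lemma cast_eq_of_lt {p x y : ℕ} (hp : p.Prime) (hx : x < p) (hy : y < p)
    (h : (x : ZMod p) = (y : ZMod p)) : x = y := by
  haveI := Fact.mk hp
  have := congrArg ZMod.val h
  rwa [ZMod.val_cast_of_lt hx, ZMod.val_cast_of_lt hy] at this

private lemma dl_inj (p w l : ℕ) (hp : p.Prime) (hw1 : 1 ≤ w) (hwp : w < p) :
    ∀ u ∈ Dl p w l, ∀ v ∈ Dl p w l, u % p = v % p → u = v := by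
  haveI := Fact.mk hp
  intro u hu v hv huv
  obtain ⟨hu2, hug, huq⟩ := mem_Dl.mp hu
  obtain ⟨hv2, hvg, hvq⟩ := mem_Dl.mp hv
  have hppos := hp.pos
  have hdu : u % p + u / p * p = u := Nat.mod_add_div' u p
  have hdv : v % p + v / p * p = v := Nat.mod_add_div' v p
  have ku : (polyQuot p w (u % p + u / p * p) : ZMod p)
      = (polyQuot p w (u % p) : ZMod p) + (w : ZMod p) * ((u % p : ℕ) : ZMod p) ^ (w - 1) * ((u / p : ℕ) : ZMod p) :=
    key p w (u % p) (u / p) hp hw1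
  have kv : (polyQuot p w (v % p + v / p * p) : ZMod p)
      = (polyQuot p w (v % p) : ZMod p) + (w : ZMod p) * ((v % p : ℕ) : ZMod p) ^ (w - 1) * ((v / p : ℕ) : ZMod p) :=
    key p w (v % p) (v / p) hp hw1
  rw [hdu, huq] at ku
  rw [hdv, hvq] at kv
  rw [huv] at ku
  have hc := cne p w (v % p) hp hw1 hwp (huv ▸ modp_pos hp hu) (Nat.mod_lt v hppos)
  have heq : ((u / p : ℕ) : ZMod p) = ((v / p : ℕ) : ZMod p) := by
    have h2 : (w : ZMod p) * ((v % p : ℕ) : ZMod p) ^ (w - 1) * ((u / p : ℕ) : ZMod p)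
        = (w : ZMod p) * ((v % p : ℕ) : ZMod p) ^ (w - 1) * ((v / p : ℕ) : ZMod p) := by
      have := ku.symm.trans kv
      linear_combination this
    exact mul_left_cancel₀ hc h2
  have hup : u / p < p := Nat.div_lt_of_lt_mul (by rw [← sq]; exact hu2)
  have hvp : v / p < p := Nat.div_lt_of_lt_mul (by rw [← sq]; exact hv2)
  have h5 := cast_eq_of_lt hp hup hvp heq
  rw [← hdu, ← hdv, huv, h5]

private lemma dl_exists (p w l : ℕ) (hp : p.Prime) (hw1 : 1 ≤ w) (hwp : w < p) (hl : l < p)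
    (a : ℕ) (ha0 : 0 < a) (hap : a < p) : ∃ u ∈ Dl p w l, u % p = a := by
  haveI := Fact.mk hp
  have hppos := hp.pos
  set c : ZMod p := (w : ZMod p) * (a : ZMod p) ^ (w - 1) with hc
  have hcne : c ≠ 0 := cne p w a hp hw1 hwp ha0 hap
  set k : ℕ := (((l : ZMod p) - (polyQuot p w a : ZMod p)) * c⁻¹).val with hk
  have hkp : k < p := ZMod.val_lt _
  refine ⟨a + k * p, ?_, ?_⟩
  · rw [mem_Dl]
    have hlt : a + k * p < p ^ 2 := by
      calc a + k * p < p + k * p := by omega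
        _ = (k + 1) * p := by ring
        _ ≤ p * p := Nat.mul_le_mul_right p (by omega)
        _ = p ^ 2 := (sq p).symm
    refine ⟨hlt, ?_, ?_⟩
    · have hnd : ¬ p ∣ a + k * p := by
        intro h
        have : p ∣ a := (Nat.dvd_add_iff_left (dvd_mul_left p k)).mpr h
        have := Nat.le_of_dvd ha0 this
        omega
      exact Nat.coprime_comm.mp (hp.coprime_iff_not_dvd.mpr hnd)
    · have hkey := key p w a k hp hw1
      have hkc : (k : ZMod p) = ((l : ZMod p) - (polyQuot p w a : ZMod p)) * c⁻¹ := by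
        rw [hk, ZMod.natCast_val, ZMod.cast_id]
      rw [hkc] at hkey
      have : ((polyQuot p w (a + k * p) : ℕ) : ZMod p) = (l : ZMod p) := by
        rw [hkey, ← hc]
        field_simp
        ring
      exact cast_eq_of_lt hp (polyQuot_lt p w _ hppos) hl this
  · rw [Nat.add_mul_mod_self_right, Nat.mod_eq_of_lt hap]

theorem stmt_7 (p w l m : ℕ) (hp : p.Prime) (hodd : Odd p)
    (hw1 : 1 ≤ w) (hwp : w < p) (hl : l < p)
    (θ : AlgebraicClosure (ZMod 2)) (hθ : IsPrimitiveRoot θ p) :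
    (∑ u ∈ Dl p w l, (θ ^ m) ^ u) = if p ∣ m then 0 else 1 := by
  haveI := Fact.mk hp
  have hp1 : 1 < p := hp.one_lt
  have hθp : θ ^ p = 1 := hθ.pow_eq_one
  have hζp : (θ ^ m) ^ p = 1 := by
    rw [← pow_mul, mul_comm, pow_mul, hθp, one_pow]
  have hsum : (∑ u ∈ Dl p w l, (θ ^ m) ^ u) = ∑ a ∈ Finset.Ico 1 p, (θ ^ m) ^ a := by
    refine Finset.sum_nbij (fun u => u % p) ?_ ?_ ?_ ?_
    · intro u hu
      rw [Finset.mem_Ico]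
      exact ⟨modp_pos hp hu, Nat.mod_lt u hp.pos⟩
    · intro u hu v hv huv
      exact dl_inj p w l hp hw1 hwp u (Finset.mem_coe.mp hu) v (Finset.mem_coe.mp hv) huv
    · intro a ha
      rw [Finset.mem_coe, Finset.mem_Ico] at ha
      obtain ⟨u, hu, hmod⟩ := dl_exists p w l hp hw1 hwp hl a ha.1 ha.2
      exact ⟨u, Finset.mem_coe.mpr hu, hmod⟩
    · intro u hu
      conv_lhs => rw [← Nat.mod_add_div u p]
      rw [pow_add, pow_mul, hζp, one_pow, mul_one]
  rw [hsum]
  by_cases hpm : p ∣ m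
  · rw [if_pos hpm]
    have hζ1 : θ ^ m = 1 := by
      obtain ⟨c, rfl⟩ := hpm
      rw [pow_mul, hθp, one_pow]
    rw [hζ1]
    simp only [one_pow, Finset.sum_const, Nat.card_Ico, smul_eq_mul, mul_one]
    have h2 : (2 : ℕ) ∣ p - 1 := by
      obtain ⟨t, ht⟩ := hodd
      omega
    rw [nsmul_eq_mul, mul_one]
    exact (CharP.cast_eq_zero_iff (AlgebraicClosure (ZMod 2)) 2 (p - 1)).mpr h2
  · rw [if_neg hpm]
    have hζprim : IsPrimitiveRoot (θ ^ m) p :=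
      hθ.pow_of_coprime m (Nat.Coprime.symm (hp.coprime_iff_not_dvd.mpr hpm))
    have hg : ∑ a ∈ Finset.range p, (θ ^ m) ^ a = 0 := hζprim.geom_sum_eq_zero hp1
    have hsplit : ∑ a ∈ Finset.range p, (θ ^ m) ^ a
        = (θ ^ m) ^ 0 + ∑ a ∈ Finset.Ico 1 p, (θ ^ m) ^ a := by
      rw [Finset.range_eq_Ico]
      exact Finset.sum_eq_sum_Ico_succ_bot (by omega) _
    rw [hg, pow_zero] at hsplit
    have h2 : (1 : AlgebraicClosure (ZMod 2)) + 1 = 0 := by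
      have := CharP.cast_eq_zero (AlgebraicClosure (ZMod 2)) 2
      push_cast at this
      linear_combination this
    linear_combination -hsplit - h2
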